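/- Let n ≥ 1, let a₁, …, aₙ with aᵢ ≥ n for each i, and let E = {x ∈ ℝⁿ : Σᵢ xᵢ²/aᵢ² ≤ 1}. Then the lattice-point discrepancy of E satisfies |card(ℤⁿ ∩ E) − vol(E)| ≤ 2ⁿ · [∏ᵢ (aᵢ + √n) − ∏ᵢ (aᵢ/√n − √n)]. -/

import Mathlib

open MeasureTheory

set_option maxHeartbeats 1000000 in
/-- Lattice-point discrepancy estimate for an ellipsoid with semi-axes `a i ≥ n`:
`|card(ℤⁿ ∩ E) - vol E| ≤ 2^n (∏ i, (a i + √n) - ∏ i, (a i / √n - √n))`. -/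
theorem ellipsoid_lattice_discrepancy (n : ℕ) (hn : 1 ≤ n)
    (a : Fin n → ℝ) (ha : ∀ i, (n : ℝ) ≤ a i) :
    |(Nat.card {p : EuclideanSpace ℝ (Fin n) //
          (∀ i, ∃ m : ℤ, p i = m) ∧ ∑ i, (p i) ^ 2 / (a i) ^ 2 ≤ 1} : ℝ)
        - (volume {x : EuclideanSpace ℝ (Fin n) | ∑ i, (x i) ^ 2 / (a i) ^ 2 ≤ 1}).toReal|
      ≤ (2 : ℝ) ^ n
          * (∏ i, (a i + Real.sqrt n) - ∏ i, (a i / Real.sqrt n - Real.sqrt n)) := by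
  have hn1 : (1 : ℝ) ≤ (n : ℝ) := by exact_mod_cast hn
  set s := Real.sqrt n with hs
  have hs1 : (1 : ℝ) ≤ s := by
    rw [hs, show (1:ℝ) = Real.sqrt 1 by simp]
    exact Real.sqrt_le_sqrt hn1
  have hs0 : (0 : ℝ) < s := lt_of_lt_of_le one_pos hs1
  have hss : s * s = (n : ℝ) := Real.mul_self_sqrt (by positivity)
  have hsn : s ≤ (n : ℝ) := by nlinarith
  have hapos : ∀ i, (0 : ℝ) < a i := fun i => lt_of_lt_of_le (by linarith) (ha i)
  -- the key per-coordinate bound for points of the ellipsoid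
  have hcoord : ∀ (x : EuclideanSpace ℝ (Fin n)),
      (∑ i, (x i) ^ 2 / (a i) ^ 2 ≤ 1) → ∀ i, |x i| ≤ a i := by
    intro x hx i
    have h1 : (x i) ^ 2 / (a i) ^ 2 ≤ 1 := by
      refine le_trans (Finset.single_le_sum (f := fun j => (x j) ^ 2 / (a j) ^ 2)
        (fun j _ => by positivity) (Finset.mem_univ i)) hx
    have h2 : (x i) ^ 2 ≤ (a i) ^ 2 := by
      have := hapos i
      rw [div_le_one (by positivity)] at h1
      exact h1
    have := hapos i
    rw [abs_le]; constructor <;> nlinarith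
  -- integer bounds
  set S := {p : EuclideanSpace ℝ (Fin n) //
      (∀ i, ∃ m : ℤ, p i = m) ∧ ∑ i, (p i) ^ 2 / (a i) ^ 2 ≤ 1} with hS
  set b : Fin n → ℤ := fun i => ⌊a i⌋ with hb
  set c : Fin n → ℤ := fun i => ⌊a i / s⌋ with hc
  have hb1 : ∀ i, (1 : ℤ) ≤ b i := fun i => by
    rw [hb]; exact_mod_cast Int.le_floor.2 (by exact_mod_cast le_trans hn1 (ha i))
  have hcs : ∀ i, s ≤ a i / s := fun i => by
    rw [le_div_iff₀ hs0]; nlinarith [ha i]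
  have hc1 : ∀ i, (1 : ℤ) ≤ c i := fun i => by
    rw [hc]; exact Int.le_floor.2 (by exact_mod_cast le_trans hs1 (hcs i))
  -- upper bound injection
  have fmem : ∀ p : S, ∀ i, ⌊(p.1 : EuclideanSpace ℝ (Fin n)) i⌋ ∈ Set.Icc (-(b i)) (b i) := by
    intro p i
    have habs := hcoord p.1 p.2.2 i
    obtain ⟨m, hm⟩ := p.2.1 i
    rw [hm, Int.floor_intCast]
    rw [hm, abs_le] at habs
    simp only [hb, Set.mem_Icc]
    constructor
    · rw [neg_le, Int.le_floor, Int.cast_neg]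
      linarith [habs.1]
    · rw [Int.le_floor]
      linarith [habs.2]
  have hfin : Finite S := by
    haveI : ∀ i, Finite (Set.Icc (-(b i)) (b i)) := fun i => (Set.finite_Icc _ _).to_subtype
    refine Finite.of_injective (fun p : S => fun i =>
      (⟨⌊(p.1 : EuclideanSpace ℝ (Fin n)) i⌋, fmem p i⟩ : Set.Icc (-(b i)) (b i))) ?_
    intro p q hpq
    apply Subtype.ext; ext i
    have := congrFun hpq i
    obtain ⟨m, hm⟩ := p.2.1 i
    obtain ⟨m', hm'⟩ := q.2.1 i
    rw [Subtype.mk_eq_mk, hm, hm', Int.floor_intCast, Int.floor_intCast] at this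
    rw [hm, hm', this]
  haveI := hfin
  have hIccCard : ∀ (x : ℤ), 0 ≤ x → ((Nat.card (Set.Icc (-x) x : Set ℤ)) : ℝ) = 2 * x + 1 := by
    intro x hx
    rw [Nat.card_eq_fintype_card, Fintype.card_Icc, Int.card_Icc]
    have h0 : (x + 1 - -x) = 2 * x + 1 := by ring
    rw [h0]
    have h4 : (((2 * x + 1).toNat : ℤ)) = 2 * x + 1 := Int.toNat_of_nonneg (by linarith)
    exact_mod_cast h4
  have hcardU : ((Nat.card S : ℕ) : ℝ) ≤ ∏ i, (2 * (a i + s)) := by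
    haveI : ∀ i, Finite (Set.Icc (-(b i)) (b i)) := fun i => (Set.finite_Icc _ _).to_subtype
    have hinj : Nat.card S ≤ Nat.card (∀ i, (Set.Icc (-(b i)) (b i) : Set ℤ)) := by
      refine Nat.card_le_card_of_injective (fun p : S => fun i =>
        (⟨⌊(p.1 : EuclideanSpace ℝ (Fin n)) i⌋, fmem p i⟩ : Set.Icc (-(b i)) (b i))) ?_
      intro p q hpq
      apply Subtype.ext; ext i
      have := congrFun hpq i
      obtain ⟨m, hm⟩ := p.2.1 i
      obtain ⟨m', hm'⟩ := q.2.1 i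
      rw [Subtype.mk_eq_mk, hm, hm', Int.floor_intCast, Int.floor_intCast] at this
      rw [hm, hm', this]
    have hpi : ((Nat.card (∀ i, (Set.Icc (-(b i)) (b i) : Set ℤ)) : ℕ) : ℝ)
        = ∏ i, ((2 : ℝ) * b i + 1) := by
      rw [Nat.card_pi]; push_cast
      refine Finset.prod_congr rfl fun i _ => ?_
      have := hIccCard (b i) (le_trans zero_le_one (hb1 i))
      push_cast at this ⊢; linarith
    calc ((Nat.card S : ℕ) : ℝ) ≤ _ := by exact_mod_cast hinj
      _ = ∏ i, ((2 : ℝ) * b i + 1) := hpi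
      _ ≤ ∏ i, (2 * (a i + s)) := by
          refine Finset.prod_le_prod (fun i _ => ?_) (fun i _ => ?_)
          · have : (1 : ℝ) ≤ (b i : ℝ) := by exact_mod_cast hb1 i
            linarith
          · have h1 : ((b i : ℝ)) ≤ a i := Int.floor_le _
            linarith
  have hcardL : ∏ i, (2 * (a i / s - s)) ≤ ((Nat.card S : ℕ) : ℝ) := by
    haveI : ∀ i, Finite (Set.Icc (-(c i)) (c i)) := fun i => (Set.finite_Icc _ _).to_subtype
    have habs : ∀ (m : ∀ i, (Set.Icc (-(c i)) (c i) : Set ℤ)) i, |((m i : ℤ) : ℝ)| ≤ a i / s := by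
      intro m i
      have h1 := (m i).2.1
      have h2 := (m i).2.2
      rw [abs_le]
      constructor
      · have : (-(c i) : ℝ) ≤ ((m i : ℤ) : ℝ) := by exact_mod_cast h1
        have hfl : ((c i : ℝ)) ≤ a i / s := Int.floor_le _
        linarith
      · have : ((m i : ℤ) : ℝ) ≤ (c i : ℝ) := by exact_mod_cast h2
        have hfl : ((c i : ℝ)) ≤ a i / s := Int.floor_le _
        linarith
    have hinj : Nat.card (∀ i, (Set.Icc (-(c i)) (c i) : Set ℤ)) ≤ Nat.card S := by
      have hg : ∀ (m : ∀ i, (Set.Icc (-(c i)) (c i) : Set ℤ)),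
          (∀ i, ∃ k : ℤ, ((WithLp.toLp 2 (fun j => ((m j : ℤ) : ℝ)) : EuclideanSpace ℝ (Fin n)) i = k)) ∧
          ∑ i, (((WithLp.toLp 2 (fun j => ((m j : ℤ) : ℝ)) : EuclideanSpace ℝ (Fin n)) i)) ^ 2 / (a i) ^ 2 ≤ 1 := by
        intro m
        constructor
        · exact fun i => ⟨(m i : ℤ), rfl⟩
        · have hterm : ∀ i ∈ Finset.univ, (((m i : ℤ) : ℝ)) ^ 2 / (a i) ^ 2 ≤ 1 / n := by
            intro i _
            have h1 := habs m i
            have h2 : (((m i : ℤ) : ℝ)) ^ 2 ≤ (a i / s) ^ 2 := by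
              have := abs_nonneg (((m i : ℤ) : ℝ))
              nlinarith [abs_nonneg (((m i : ℤ) : ℝ)), sq_abs (((m i : ℤ) : ℝ)),
                hcs i, hs0]
            have hs2 : s ^ 2 = (n : ℝ) := by rw [sq]; exact hss
            have ha0 : a i ≠ 0 := ne_of_gt (hapos i)
            have hn0 : (n : ℝ) ≠ 0 := by positivity
            have h3 : (a i / s) ^ 2 / (a i) ^ 2 = (1 : ℝ) / (n : ℝ) := by
              rw [div_pow, hs2]
              field_simp
            calc (((m i : ℤ) : ℝ)) ^ 2 / (a i) ^ 2 ≤ (a i / s) ^ 2 / (a i) ^ 2 := by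
                  gcongr
              _ = (1 : ℝ) / (n : ℝ) := h3
          calc ∑ i, (((WithLp.toLp 2 (fun j => ((m j : ℤ) : ℝ)) : EuclideanSpace ℝ (Fin n)) i)) ^ 2 / (a i) ^ 2
              ≤ ∑ _i : Fin n, (1 : ℝ) / (n : ℝ) := Finset.sum_le_sum hterm
            _ = 1 := by
                rw [Finset.sum_const, Finset.card_univ, Fintype.card_fin, nsmul_eq_mul]
                field_simp
      refine Nat.card_le_card_of_injective
        (fun m => (⟨WithLp.toLp 2 (fun j => ((m j : ℤ) : ℝ)), hg m⟩ : S)) ?_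
      intro m m' hmm
      funext i
      have h2 : ((m i : ℤ) : ℝ) = ((m' i : ℤ) : ℝ) :=
        congrFun (congrArg (fun x => WithLp.ofLp x.1) hmm) i
      apply Subtype.ext
      exact_mod_cast h2
    have hpi : ((Nat.card (∀ i, (Set.Icc (-(c i)) (c i) : Set ℤ)) : ℕ) : ℝ)
        = ∏ i, ((2 : ℝ) * c i + 1) := by
      rw [Nat.card_pi]; push_cast
      refine Finset.prod_congr rfl fun i _ => ?_
      have := hIccCard (c i) (le_trans zero_le_one (hc1 i))
      push_cast at this ⊢; linarith
    calc ∏ i, (2 * (a i / s - s)) ≤ ∏ i, ((2 : ℝ) * c i + 1) := by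
          refine Finset.prod_le_prod (fun i _ => ?_) (fun i _ => ?_)
          · have := hcs i; linarith
          · have h1 : a i / s - 1 ≤ (c i : ℝ) := by
              have := Int.sub_one_lt_floor (a i / s)
              rw [hc]; linarith
            linarith
      _ = _ := hpi.symm
      _ ≤ ((Nat.card S : ℕ) : ℝ) := by exact_mod_cast hinj
  -- volume bounds
  have hcoordpi : ∀ (y : Fin n → ℝ),
      (∑ i, (y i) ^ 2 / (a i) ^ 2 ≤ 1) → ∀ i, |y i| ≤ a i := by
    intro y hy i
    have h1 : (y i) ^ 2 / (a i) ^ 2 ≤ 1 := by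
      refine le_trans (Finset.single_le_sum (f := fun j => (y j) ^ 2 / (a j) ^ 2)
        (fun j _ => by positivity) (Finset.mem_univ i)) hy
    have h2 : (y i) ^ 2 ≤ (a i) ^ 2 := by
      have := hapos i
      rw [div_le_one (by positivity)] at h1
      exact h1
    have := hapos i
    rw [abs_le]; constructor <;> nlinarith
  set Spi := {y : Fin n → ℝ | ∑ i, (y i) ^ 2 / (a i) ^ 2 ≤ 1} with hSpi
  have hmeas : MeasurableSet Spi := by
    apply measurableSet_le
    · exact (continuous_finset_sum _ fun i _ =>
        ((continuous_apply i).pow 2).div_const _).measurable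
    · exact measurable_const
  have hEeq : volume {x : EuclideanSpace ℝ (Fin n) | ∑ i, (x i) ^ 2 / (a i) ^ 2 ≤ 1}
      = volume Spi := by
    have : {x : EuclideanSpace ℝ (Fin n) | ∑ i, (x i) ^ 2 / (a i) ^ 2 ≤ 1}
        = (MeasurableEquiv.toLp 2 (Fin n → ℝ)).symm ⁻¹' Spi := rfl
    rw [this]
    exact (EuclideanSpace.volume_preserving_symm_measurableEquiv_toLp (Fin n)).measure_preimage
      hmeas.nullMeasurableSet
  have hsub1 : Spi ⊆ Set.univ.pi fun i => Set.Icc (-(a i)) (a i) := by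
    intro y hy
    rw [Set.mem_univ_pi]
    intro i
    have := hcoordpi y hy i
    rw [abs_le] at this
    exact ⟨this.1, this.2⟩
  have hsub2 : (Set.univ.pi fun i => Set.Icc (-(a i / s)) (a i / s)) ⊆ Spi := by
    intro y hy
    rw [Set.mem_univ_pi] at hy
    rw [hSpi, Set.mem_setOf_eq]
    have hterm : ∀ i ∈ Finset.univ, (y i) ^ 2 / (a i) ^ 2 ≤ (1 : ℝ) / (n : ℝ) := by
      intro i _
      have h1 := (hy i).1
      have h2 := (hy i).2
      have h2' : (y i) ^ 2 ≤ (a i / s) ^ 2 := by nlinarith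
      have hs2 : s ^ 2 = (n : ℝ) := by rw [sq]; exact hss
      have ha0 : a i ≠ 0 := ne_of_gt (hapos i)
      have hn0 : (n : ℝ) ≠ 0 := by positivity
      have h3 : (a i / s) ^ 2 / (a i) ^ 2 = (1 : ℝ) / (n : ℝ) := by
        rw [div_pow, hs2]
        field_simp
      calc (y i) ^ 2 / (a i) ^ 2 ≤ (a i / s) ^ 2 / (a i) ^ 2 := by gcongr
        _ = (1 : ℝ) / (n : ℝ) := h3
    calc ∑ i, (y i) ^ 2 / (a i) ^ 2 ≤ ∑ _i : Fin n, (1 : ℝ) / (n : ℝ) :=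
          Finset.sum_le_sum hterm
      _ = 1 := by
          rw [Finset.sum_const, Finset.card_univ, Fintype.card_fin, nsmul_eq_mul]
          field_simp
  have hboxU : volume (Set.univ.pi fun i => Set.Icc (-(a i)) (a i))
      = ENNReal.ofReal (∏ i, (2 * a i)) := by
    rw [volume_pi_pi, ENNReal.ofReal_prod_of_nonneg (fun i _ => by
      have := hapos i; linarith)]
    refine Finset.prod_congr rfl fun i _ => ?_
    rw [Real.volume_Icc]
    congr 1
    ring
  have hboxL : volume (Set.univ.pi fun i => Set.Icc (-(a i / s)) (a i / s))
      = ENNReal.ofReal (∏ i, (2 * (a i / s))) := by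
    rw [volume_pi_pi, ENNReal.ofReal_prod_of_nonneg (fun i _ => by
      have := hapos i; have := hs0; positivity)]
    refine Finset.prod_congr rfl fun i _ => ?_
    rw [Real.volume_Icc]
    congr 1
    ring
  have hvol_netop : volume Spi ≠ ⊤ := by
    refine ne_top_of_le_ne_top ?_ (measure_mono hsub1)
    rw [hboxU]
    exact ENNReal.ofReal_ne_top
  have hvolU : (volume {x : EuclideanSpace ℝ (Fin n) |
      ∑ i, (x i) ^ 2 / (a i) ^ 2 ≤ 1}).toReal ≤ ∏ i, (2 * (a i + s)) := by
    rw [hEeq]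
    have h1 : (volume Spi).toReal ≤ ∏ i, (2 * a i) := by
      have := measure_mono (μ := (volume : Measure (Fin n → ℝ))) hsub1
      rw [hboxU] at this
      calc (volume Spi).toReal ≤ (ENNReal.ofReal (∏ i, (2 * a i))).toReal :=
            ENNReal.toReal_mono ENNReal.ofReal_ne_top this
        _ = ∏ i, (2 * a i) := ENNReal.toReal_ofReal
            (Finset.prod_nonneg fun i _ => by linarith only [hapos i])
    refine le_trans h1 (Finset.prod_le_prod (fun i _ => by
      linarith only [hapos i]) fun i _ => by linarith only [hs0])
  have hvolL : ∏ i, (2 * (a i / s - s)) ≤ (volume {x : EuclideanSpace ℝ (Fin n) |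
      ∑ i, (x i) ^ 2 / (a i) ^ 2 ≤ 1}).toReal := by
    rw [hEeq]
    have h1 : ∏ i, (2 * (a i / s)) ≤ (volume Spi).toReal := by
      have := measure_mono (μ := (volume : Measure (Fin n → ℝ))) hsub2
      rw [hboxL] at this
      calc ∏ i, (2 * (a i / s)) = (ENNReal.ofReal (∏ i, (2 * (a i / s)))).toReal :=
            (ENNReal.toReal_ofReal (Finset.prod_nonneg fun i _ => by
              have := hapos i; have := hs0; positivity)).symm
        _ ≤ (volume Spi).toReal := ENNReal.toReal_mono hvol_netop this
    refine le_trans (Finset.prod_le_prod (fun i _ => ?_) fun i _ => ?_) h1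
    · linarith only [hcs i]
    · linarith only [hs0]
  -- final assembly
  have hprodU : ∏ i, (2 * (a i + s)) = 2 ^ n * ∏ i, (a i + s) := by
    rw [Finset.prod_mul_distrib, Finset.prod_const, Finset.card_univ, Fintype.card_fin]
  have hprodL : ∏ i, (2 * (a i / s - s)) = 2 ^ n * ∏ i, (a i / s - s) := by
    rw [Finset.prod_mul_distrib, Finset.prod_const, Finset.card_univ, Fintype.card_fin]
  rw [abs_sub_le_iff]
  rw [hprodU] at hcardU hvolU
  rw [hprodL] at hcardL hvolL
  have hms := mul_sub ((2 : ℝ) ^ n) (∏ i, (a i + s)) (∏ i, (a i / s - s))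
  constructor
  · linarith only [hcardU, hvolL, hms]
  · linarith only [hcardL, hvolU, hms]
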